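/- arXiv:1607.07658 — 2 statements merged into one kernel-verified Lean document; each statement's English description precedes it below -/
import Mathlib

section
/- Let l ∈ {1,...,k} and w ∈ X^{(k-l)}. If s is the smallest integer x ∈ {l,...,n-1} such that c_l(x+1) ≤ D_l(w)/l, then s is an optimal point of the map F_{l,w}. Consequently, if t is the smallest integer x ∈ {1,...,n-l} such that d_l(x) ≤ D_l(w)/l, then t + l - 1 is an optimal point of F_{l,w}. -/
open Finset

namespace Secretary

/-- Binomial coefficient on integers: zero when `b < 0` or `b > a`. -/
noncomputable def Cb (a b : ℤ) : ℝ :=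
  if 0 ≤ b ∧ b ≤ a then (Nat.choose a.toNat b.toNat : ℝ) else 0

/-- The value `π(i)` of a permutation of `{1,...,n}` in 1-based indexing. -/
def pv (n : ℕ) (π : Equiv.Perm (Fin n)) (i : ℕ) : ℕ :=
  if h : i - 1 < n then ((π ⟨i - 1, h⟩ : Fin n) : ℕ) + 1 else 0

/-- The relative rank `ρ_π(i)`: the number of `j ∈ {1,...,i}` with `π(j) ≤ π(i)`. -/
def rho (n : ℕ) (π : Equiv.Perm (Fin n)) (i : ℕ) : ℕ :=
  ((Finset.Icc 1 i).filter fun j => pv n π j ≤ pv n π i).card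

/-- Extension of a sequence `s` with `s (k+1) = n - 1`. -/
def sExt (n k : ℕ) (s : ℕ → ℕ) (l : ℕ) : ℕ := if l = k + 1 then n - 1 else s l

/-- `i` is a `(π, l, w)`-element. -/
def IsElem (n k : ℕ) (s : ℕ → ℕ) (π : Equiv.Perm (Fin n)) (l i : ℕ) : Prop :=
  sExt n k s l < i ∧ i ≤ sExt n k s (l + 1) ∧ rho n π i ≤ l

/-- `l` is a `w`-threshold of `π`. -/
def IsThreshold (n k : ℕ) (s : ℕ → ℕ) (π : Equiv.Perm (Fin n)) (l : ℕ) : Prop :=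
  1 ≤ l ∧ l ≤ k ∧ ∃ i, IsElem n k s π l i

open Classical in
/-- `π` is a lucky permutation for the sequence `w = s`. -/
def Lucky (n k : ℕ) (s : ℕ → ℕ) (π : Equiv.Perm (Fin n)) : Prop :=
  if ∃ l, IsThreshold n k s π l then
    pv n π (sInf {i | IsElem n k s π (sInf {l | IsThreshold n k s π l}) i}) ≤ k
  else pv n π n ≤ k

/-- The maps `r_l` (first argument an integer `l ≤ k`). -/
noncomputable def rr (n k : ℕ) (l : ℤ) (x : ℕ) : ℝ :=
  if l < 0 then 0
  else if l = 0 then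
    1 / (x : ℝ) - (k : ℝ) / n - Cb ((n : ℤ) - x - 1) k / ((x : ℝ) * Cb n k)
      - (1 / Cb n k) * ∑ j ∈ Finset.Icc 1 x, Cb ((n : ℤ) - j - 1) ((k : ℤ) - 1) / (j : ℝ)
  else
    ((Nat.factorial (x - l.toNat - 1) : ℝ) / (Nat.factorial x : ℝ)) *
      (1 - (1 / ((l : ℝ) * Cb n x)) *
        ∑ j ∈ Finset.range (l.toNat + 1),
          ((l : ℝ) - j) * Cb k j * Cb ((n : ℤ) - k) ((x : ℤ) - j))

/-- The constant `δ_{k,n}`. -/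
noncomputable def delta (n k : ℕ) : ℝ :=
  if k = 1 then -(1 / (n : ℝ)) * ∑ j ∈ Finset.Icc 1 (n - 1), (1 : ℝ) / j
  else (Nat.factorial (n - k) : ℝ) / (Nat.factorial n : ℝ)

/-- The maps `d_l` for `0 ≤ l ≤ k`. -/
noncomputable def d (n k : ℕ) (l x : ℕ) : ℝ :=
  if l = 0 then
    -1 + (k : ℝ) * x / n + Cb ((n : ℤ) - x - 1) k / Cb n k
      + ((x : ℝ) / Cb n k) * ∑ j ∈ Finset.Icc 1 x, Cb ((n : ℤ) - j - 1) ((k : ℤ) - 1) / (j : ℝ)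
  else if l = 1 then
    -((k : ℝ) / n) - (1 / Cb n k) * ∑ j ∈ Finset.Icc 1 x, Cb ((n : ℤ) - j - 1) ((k : ℤ) - 1) / (j : ℝ)
  else
    ((k : ℝ) * (Nat.factorial x : ℝ) * (Nat.factorial (n - l - x) : ℝ) /
        ((l : ℝ) * ((l : ℝ) - 1) * (Nat.factorial n : ℝ))) *
      ∑ j ∈ Finset.range (l - 1), Cb ((k : ℤ) - 1) j * Cb ((n : ℤ) - k) ((x : ℤ) + l - j - 1)

/-- The maps `c_l(x) = d_l(x - l)`. -/
noncomputable def c (n k l x : ℕ) : ℝ := d n k l (x - l)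

/-- The constant `ξ_{k,n}`. -/
noncomputable def xi (n k : ℕ) : ℝ :=
  (k : ℝ) * (Nat.factorial (n - k - 1) : ℝ) / (Nat.factorial n : ℝ)

/-- `w` (given as a 1-indexed function) is a word in `X^{(k-l)}`, i.e. its `j`-th letter
belongs to `X_{l+j} = {l+j, ..., n-1}` for `1 ≤ j ≤ k - l`. -/
def memX (n k l : ℕ) (w : ℕ → ℕ) : Prop :=
  ∀ j ∈ Finset.Icc 1 (k - l), l + j ≤ w j ∧ w j ≤ n - 1

/-- The left-shift operator removing the first `l` letters of a word. -/
def shift (l : ℕ) (w : ℕ → ℕ) : ℕ → ℕ := fun j => w (l + j)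

/-- The maps `R_{l,j}`. -/
noncomputable def Rmap (n k l : ℕ) (w : ℕ → ℕ) (j : ℕ) : ℝ :=
  if 1 ≤ j ∧ j ≤ k - l then
    rr n k ((l : ℤ) + j - 1) (w j)
      - rr n k ((l : ℤ) + j - 1) (if j = k - l then n - 1 else w (j + 1))
  else 0

/-- The maps `Γ_{l,j,j'}`. -/
noncomputable def Gam (n k l j j' : ℕ) (w : ℕ → ℕ) : ℝ :=
  if 1 ≤ j ∧ j ≤ j' ∧ j' ≤ k - l then
    ∏ t ∈ Finset.Icc j j', ((w t : ℝ) - l - t + 1)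
  else 1

/-- The maps `T_l`. -/
noncomputable def Tmap (n k l : ℕ) (w : ℕ → ℕ) : ℝ :=
  (∑ j ∈ Finset.Icc 1 (k - l), Rmap n k l w j * Gam n k l 1 j w)
    + xi n k * Gam n k l 1 (k - l) w

/-- The maps `D_l(w) = r_{l-1}(x_1) - T_l(w)`, with `x_1 := n-1` when `l = k`. -/
noncomputable def Dmap (n k l : ℕ) (w : ℕ → ℕ) : ℝ :=
  rr n k ((l : ℤ) - 1) (if l = k then n - 1 else w 1) - Tmap n k l w

/-- The maps `F_{l,w}(x) = -c_{l-1}(x) - x·D_l(w)`. -/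
noncomputable def Fmap (n k l : ℕ) (w : ℕ → ℕ) (x : ℕ) : ℝ :=
  -(c n k (l - 1) x) - (x : ℝ) * Dmap n k l w

/-- The maps `a_l`. -/
noncomputable def amap (n k l x : ℕ) : ℝ :=
  (1 / Cb n x) * ∑ j ∈ Finset.range (l + 1), Cb k j * Cb ((n : ℤ) - k) ((x : ℤ) - j)

/-- The maps `b_l`. -/
noncomputable def bmap (n k l x : ℕ) : ℝ :=
  (1 / ((l : ℝ) * Cb n x)) *
    ∑ j ∈ Finset.range (l + 1), (j : ℝ) * Cb k j * Cb ((n : ℤ) - k) ((x : ℤ) - j)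

/-- `π ∈ S(l0, i0)`: `π` is lucky for `s`, `l0` is the smallest `s`-threshold of `π`,
and `i0` is the smallest `(π, l0, s)`-element. -/
def SMem (n k : ℕ) (s : ℕ → ℕ) (l0 i0 : ℕ) (π : Equiv.Perm (Fin n)) : Prop :=
  Lucky n k s π ∧ IsLeast {l | IsThreshold n k s π l} l0 ∧
    IsLeast {i | IsElem n k s π l0 i} i0

/-- `π ∈ S(Y, Y', l0, i0)`. -/
def SYYMem (n k : ℕ) (s : ℕ → ℕ) (Y Y' : Finset ℕ) (l0 i0 : ℕ) (π : Equiv.Perm (Fin n)) :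
    Prop :=
  SMem n k s l0 i0 π ∧ ((Finset.Icc 1 i0).image (pv n π)) ∩ Finset.Icc 1 k = Y ∧
    ((Finset.Icc 1 i0).image (pv n π)) ∩ Finset.Icc (k + 1) n = Y'


/-! ### Auxiliary lemmas for `optimal_point_Fmap` -/

lemma Cb_natCast' (a b : ℕ) : Cb (a:ℤ) (b:ℤ) = (a.choose b : ℝ) := by
  unfold Cb
  split_ifs with h
  · simp
  · push_neg at h
    have hba : a < b := by exact_mod_cast h (by positivity)
    rw [Nat.choose_eq_zero_of_lt hba]; simp

lemma Cb_nonneg' (a b : ℤ) : 0 ≤ Cb a b := by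
  unfold Cb; split_ifs
  · positivity
  · exact le_refl 0

lemma Cb_mul_id (N : ℕ) (m : ℤ) (hm : 1 ≤ m) :
    (m : ℝ) * Cb (N:ℤ) m = ((N:ℝ) - m + 1) * Cb (N:ℤ) (m-1) := by
  obtain ⟨a, rfl⟩ : ∃ a : ℕ, m = (a:ℤ) + 1 := ⟨(m-1).toNat, by omega⟩
  have h2 : ((a:ℤ)+1-1) = ((a : ℕ) : ℤ) := by push_cast; ring
  have h1 : ((a:ℤ)+1) = ((a+1 : ℕ) : ℤ) := by push_cast; ring
  rw [h2, h1, Cb_natCast', Cb_natCast']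
  rcases le_or_gt (a+1) N with h | h
  · have hnat := Nat.choose_succ_right_eq N a
    have hc : ((N.choose (a+1) : ℝ)) * ((a:ℝ)+1) = (N.choose a : ℝ) * (((N - a : ℕ) : ℕ) : ℝ) := by
      exact_mod_cast hnat
    rw [Nat.cast_sub (by omega : a ≤ N)] at hc
    push_cast
    linarith [hc]
  · rw [Nat.choose_eq_zero_of_lt h]
    rcases le_or_gt a N with h' | h'
    · have ha : a = N := by omega
      subst ha; push_cast; ring
    · rw [Nat.choose_eq_zero_of_lt h']; simp

lemma Cb_pascal (m k : ℕ) (hk : 1 ≤ k) :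
    Cb ((m:ℤ)+1) (k:ℤ) = Cb (m:ℤ) (k:ℤ) + Cb (m:ℤ) ((k:ℤ)-1) := by
  have h2 : ((k:ℤ)-1) = ((k-1 : ℕ) : ℤ) := by push_cast [Nat.cast_sub hk]; ring
  have h1 : ((m:ℤ)+1) = ((m+1 : ℕ) : ℤ) := by push_cast; ring
  rw [h2, h1, Cb_natCast', Cb_natCast', Cb_natCast']
  have hk' : k = (k-1)+1 := by omega
  rw [hk', Nat.choose_succ_succ' m (k-1)]
  push_cast; ring

lemma Cb_congr {a b a' b' : ℤ} (ha : a = a') (hb : b = b') : Cb a b = Cb a' b' := by rw [ha, hb]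

lemma d_def2 (n k l x : ℕ) (hl : 2 ≤ l) : d n k l x =
    ((k : ℝ) * (Nat.factorial x : ℝ) * (Nat.factorial (n - l - x) : ℝ) /
        ((l : ℝ) * ((l : ℝ) - 1) * (Nat.factorial n : ℝ))) *
      ∑ j ∈ Finset.range (l - 1), Cb ((k : ℤ) - 1) j * Cb ((n : ℤ) - k) ((x : ℤ) + l - j - 1) := by
  rw [d, if_neg (by omega), if_neg (by omega)]

lemma diff1 (n k : ℕ) (hk : 1 ≤ k) (hkn : k ≤ n) (y : ℕ) (hy : 1 ≤ y) (hyn : y + 2 ≤ n) :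
    d n k 0 (y+1) - d n k 0 y = -(1:ℝ) * d n k 1 y := by
  have hApos : (0:ℝ) < Cb (n:ℤ) (k:ℤ) := by
    rw [Cb_natCast']; exact_mod_cast Nat.choose_pos hkn
  have hnpos : (0:ℝ) < n := by exact_mod_cast (by omega : 0 < n)
  have e3 : (n:ℤ) - (↑(y+1):ℤ) - 1 = (n:ℤ) - ↑y - 2 := by push_cast; ring
  have hPas : Cb ((n:ℤ)-y-1) (k:ℤ) = Cb ((n:ℤ)-y-2) (k:ℤ) + Cb ((n:ℤ)-y-2) ((k:ℤ)-1) := by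
    have e1 : (n:ℤ)-y-1 = ((n-y-2 : ℕ):ℤ)+1 := by omega
    have e2 : (n:ℤ)-y-2 = ((n-y-2:ℕ):ℤ) := by omega
    rw [e1, e2]; exact Cb_pascal _ k hk
  simp only [d, if_pos, if_neg one_ne_zero, reduceIte]
  rw [Finset.sum_Icc_succ_top (by omega : 1 ≤ y+1), e3]
  set A := Cb (n:ℤ) (k:ℤ) with hA
  set P := Cb ((n:ℤ)-y-2) ((k:ℤ)-1) with hP
  set S0 := ∑ j ∈ Finset.Icc 1 y, Cb ((n : ℤ) - j - 1) ((k : ℤ) - 1) / (j : ℝ) with hS0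
  rw [hPas]
  have hy1 : ((y:ℝ)+1) ≠ 0 := by positivity
  push_cast
  field_simp
  ring

lemma diff2 (n k : ℕ) (hk : 1 ≤ k) (hkn : k ≤ n) (y : ℕ) (hy : 1 ≤ y) (hyn : y + 2 ≤ n) :
    d n k 1 (y+1) - d n k 1 y = -(2:ℝ) * d n k 2 y := by
  have hApos : (0:ℝ) < Cb (n:ℤ) (k:ℤ) := by
    rw [Cb_natCast']; exact_mod_cast Nat.choose_pos hkn
  have e0 : Cb ((k:ℤ)-1) ((0:ℕ):ℤ) = 1 := by
    have : (k:ℤ)-1 = ((k-1:ℕ):ℤ) := by omega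
    rw [this, Cb_natCast']; simp
  have e1 : Cb ((n:ℤ)-k) ((y:ℤ)+((2:ℕ):ℤ)-((0:ℕ):ℤ)-1) = ((n-k).choose (y+1) : ℝ) := by
    have h1 : (n:ℤ)-k = ((n-k:ℕ):ℤ) := by omega
    have h2 : (y:ℤ)+((2:ℕ):ℤ)-((0:ℕ):ℤ)-1 = ((y+1:ℕ):ℤ) := by push_cast; ring
    rw [h1, h2, Cb_natCast']
  have e2 : Cb ((n:ℤ)-(↑(y+1):ℤ)-1) ((k:ℤ)-1) = ((n-y-2).choose (k-1) : ℝ) := by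
    have h1 : (n:ℤ)-(↑(y+1):ℤ)-1 = ((n-y-2:ℕ):ℤ) := by omega
    have h2 : (k:ℤ)-1 = ((k-1:ℕ):ℤ) := by omega
    rw [h1, h2, Cb_natCast']
  have key : ((n-y-2).choose (k-1) : ℝ) * (Nat.factorial n) =
      (k:ℝ) * (Nat.factorial y) * (Nat.factorial (n-2-y)) * ((n-k).choose (y+1)) * ((y:ℝ)+1)
        * (n.choose k) := by
    rcases le_or_gt (y+1) (n-k) with hc | hc
    · have f1 : (n.choose k : ℝ) = (Nat.factorial n) / (Nat.factorial k * Nat.factorial (n-k)) :=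
        Nat.cast_choose ℝ hkn
      have f2 : ((n-k).choose (y+1) : ℝ) =
          (Nat.factorial (n-k)) / (Nat.factorial (y+1) * Nat.factorial (n-k-(y+1))) :=
        Nat.cast_choose ℝ hc
      have f3 : ((n-y-2).choose (k-1) : ℝ) =
          (Nat.factorial (n-y-2)) / (Nat.factorial (k-1) * Nat.factorial ((n-y-2)-(k-1))) :=
        Nat.cast_choose ℝ (by omega)
      have g1 : (n-y-2) - (k-1) = n-k-(y+1) := by omega
      have g2 : n-2-y = n-y-2 := by omega
      have g3 : (Nat.factorial (y+1) : ℝ) = ((y:ℝ)+1) * Nat.factorial y := by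
        rw [Nat.factorial_succ]; push_cast; ring
      have g4 : (Nat.factorial k : ℝ) = (k:ℝ) * Nat.factorial (k-1) := by
        rw [← Nat.mul_factorial_pred (by omega : k ≠ 0)]; push_cast; ring
      rw [f1, f2, f3, g1, g2, g3, g4]
      have p1 : (Nat.factorial (k-1) : ℝ) ≠ 0 := by positivity
      have p2 : (Nat.factorial (n-k-(y+1)) : ℝ) ≠ 0 := by positivity
      have p3 : (Nat.factorial y : ℝ) ≠ 0 := by positivity
      have p4 : (Nat.factorial (n-k) : ℝ) ≠ 0 := by positivity
      have p5 : ((y:ℝ)+1) ≠ 0 := by positivity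
      have p6 : (k:ℝ) ≠ 0 := by positivity
      field_simp
    · rw [Nat.choose_eq_zero_of_lt hc, Nat.choose_eq_zero_of_lt (by omega : n-y-2 < k-1)]
      simp
  simp only [d, if_neg one_ne_zero, reduceIte, if_neg (by norm_num : (2:ℕ) ≠ 0),
    if_neg (by norm_num : (2:ℕ) ≠ 1)]
  rw [Finset.sum_Icc_succ_top (by omega : 1 ≤ y+1), Finset.sum_range_one, e0, e1, e2,
    Cb_natCast' n k]
  have hnf : (0:ℝ) < Nat.factorial n := by positivity
  have hy1 : (0:ℝ) < (y:ℝ)+1 := by positivity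
  have hA : (0:ℝ) < (n.choose k : ℝ) := by exact_mod_cast Nat.choose_pos hkn
  set A := (n.choose k : ℝ)
  set S0 := ∑ j ∈ Finset.Icc 1 y, Cb ((n:ℤ) - j - 1) ((k:ℤ) - 1) / (j:ℝ)
  set C1 := ((n-y-2).choose (k-1) : ℝ)
  set C2 := ((n-k).choose (y+1) : ℝ)
  have hcast : ((y+1 : ℕ) : ℝ) = (y:ℝ)+1 := by push_cast; ring
  rw [hcast]
  have lhs_eq : -((k:ℝ) / n) - 1 / A * (S0 + C1 / ((y:ℝ)+1)) - (-((k:ℝ) / n) - 1 / A * S0)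
      = -(C1 / (A * ((y:ℝ)+1))) := by field_simp; ring
  rw [lhs_eq]
  have rhs_eq : -(2:ℝ) * ((k:ℝ) * (Nat.factorial y : ℝ) * (Nat.factorial (n-2-y) : ℝ) /
        (((2:ℕ):ℝ) * (((2:ℕ):ℝ) - 1) * (Nat.factorial n : ℝ)) * (1 * C2))
      = -((k:ℝ) * (Nat.factorial y : ℝ) * (Nat.factorial (n-2-y) : ℝ) * C2 /
          (Nat.factorial n : ℝ)) := by push_cast; ring
  rw [rhs_eq, neg_inj, div_eq_div_iff (by positivity : (A * ((y:ℝ)+1)) ≠ 0) hnf.ne']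
  linear_combination key

lemma sum_id (n k l y : ℕ) (hk : 1 ≤ k) (hkn : k ≤ n) (hl : 3 ≤ l) (hyn : y + l ≤ n) :
    (((y:ℝ)+1) * ∑ j ∈ Finset.range (l-2),
        Cb ((k:ℤ)-1) j * Cb ((n:ℤ)-k) ((y:ℤ)+l-j-1))
    + ((l:ℝ)-2) * (∑ j ∈ Finset.range (l-1),
        Cb ((k:ℤ)-1) j * Cb ((n:ℤ)-k) ((y:ℤ)+l-j-1))
    = ((n:ℝ)-l-y+1) * ∑ j ∈ Finset.range (l-2),
        Cb ((k:ℤ)-1) j * Cb ((n:ℤ)-k) ((y:ℤ)+l-j-2) := by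
  set K : ℤ := (k:ℤ)-1 with hK
  set Nz : ℤ := (n:ℤ)-k with hNz
  set T : ℕ → ℝ := fun j => Cb K j * Cb Nz ((y:ℤ)+l-j-1) with hT
  have per_j : ∀ j, j < l-2 → ((n:ℝ)-l-y+1) * (Cb K j * Cb Nz ((y:ℤ)+l-j-2))
      = ((y:ℝ)+l-j-1) * T j + ((j:ℝ)+1) * T (j+1) := by
    intro j hj
    have hm : (1:ℤ) ≤ (y:ℤ)+l-j-1 := by omega
    have h1 := Cb_mul_id (n-k) ((y:ℤ)+l-j-1) hm
    have h2 := Cb_mul_id (k-1) ((j:ℤ)+1) (by omega)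
    rw [(by omega : ((n-k:ℕ):ℤ) = Nz)] at h1
    rw [(by omega : ((k-1:ℕ):ℤ) = K)] at h2
    rw [Cb_congr (rfl : Nz = Nz) (by ring : (y:ℤ)+l-j-1-1 = (y:ℤ)+l-j-2)] at h1
    rw [Cb_congr (rfl : K = K) (by ring : (j:ℤ)+1-1 = (j:ℤ))] at h2
    have hc1 : (((y:ℤ)+l-j-1 : ℤ) : ℝ) = (y:ℝ)+l-j-1 := by push_cast; ring
    have hc2 : ((n-k:ℕ):ℝ) = (n:ℝ)-k := by push_cast [Nat.cast_sub hkn]; ring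
    have hc3 : ((((j:ℤ)+1) : ℤ) : ℝ) = (j:ℝ)+1 := by push_cast; ring
    have hc4 : ((k-1:ℕ):ℝ) = (k:ℝ)-1 := by push_cast [Nat.cast_sub hk]; ring
    rw [hc1, hc2] at h1
    rw [hc3, hc4] at h2
    have hTj1 : T (j+1) = Cb K ((j:ℤ)+1) * Cb Nz ((y:ℤ)+l-j-2) := by
      simp only [hT]
      rw [Cb_congr (rfl : Nz = Nz)
        (by push_cast; ring : ((y:ℤ)+(l:ℤ)-((j+1:ℕ):ℤ)-1) = (y:ℤ)+(l:ℤ)-(j:ℤ)-2),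
        Cb_congr (rfl : K = K) (by push_cast; ring : ((j+1:ℕ):ℤ) = (j:ℤ)+1)]
    rw [hTj1]
    simp only [hT]
    linear_combination (-(Cb K (j:ℤ))) * h1 - Cb Nz ((y:ℤ)+(l:ℤ)-(j:ℤ)-2) * h2
  have expand : ((n:ℝ)-l-y+1) * ∑ j ∈ Finset.range (l-2), Cb K (j:ℤ) * Cb Nz ((y:ℤ)+l-j-2)
      = (∑ j ∈ Finset.range (l-2), ((y:ℝ)+l-j-1) * T j)
        + ∑ j ∈ Finset.range (l-2), ((j:ℝ)+1) * T (j+1) := by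
    rw [Finset.mul_sum, ← Finset.sum_add_distrib]
    exact Finset.sum_congr rfl (fun j hj => per_j j (Finset.mem_range.mp hj))
  have shift : ∑ j ∈ Finset.range (l-2), ((j:ℝ)+1) * T (j+1)
      = ∑ j ∈ Finset.range (l-1), (j:ℝ) * T j := by
    have h := Finset.sum_range_succ' (fun j => (j:ℝ) * T j) (l-2)
    rw [(by omega : l-1 = (l-2)+1), h]
    push_cast
    simp
  rw [expand, shift]
  have split : ∑ j ∈ Finset.range (l-1), (j:ℝ) * T j
      = (∑ j ∈ Finset.range (l-2), (j:ℝ) * T j) + ((l:ℝ)-2) * T (l-2) := by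
    rw [(by omega : l-1 = (l-2)+1), Finset.sum_range_succ]
    push_cast [Nat.cast_sub (by omega : 2 ≤ l)]
    ring
  have split2 : ((l:ℝ)-2) * ∑ j ∈ Finset.range (l-1), T j
      = (∑ j ∈ Finset.range (l-2), ((l:ℝ)-2) * T j) + ((l:ℝ)-2) * T (l-2) := by
    rw [(by omega : l-1 = (l-2)+1), Finset.sum_range_succ, mul_add, Finset.mul_sum]
  rw [split, split2, Finset.mul_sum]
  have hcongr : ∑ j ∈ Finset.range (l-2), (((y:ℝ)+1) * T j + (((l:ℝ)-2) * T j))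
      = ∑ j ∈ Finset.range (l-2), (((y:ℝ)+(l:ℝ)-(j:ℝ)-1) * T j + (j:ℝ) * T j) :=
    Finset.sum_congr rfl (fun j hj => by ring)
  rw [Finset.sum_add_distrib, Finset.sum_add_distrib] at hcongr
  linarith [hcongr]

lemma diffl (n k : ℕ) (hk : 1 ≤ k) (hkn : k ≤ n) (l y : ℕ) (hl : 3 ≤ l) (hy : 1 ≤ y)
    (hyn : y + l ≤ n) :
    d n k (l-1) (y+1) - d n k (l-1) y = -(l:ℝ) * d n k l y := by
  rw [d_def2 n k (l-1) (y+1) (by omega), d_def2 n k (l-1) y (by omega),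
    d_def2 n k l y (by omega)]
  have hls : l - 1 - 1 = l - 2 := by omega
  rw [hls]
  have hs1 : ∑ j ∈ Finset.range (l-2),
        Cb ((k:ℤ)-1) j * Cb ((n:ℤ)-k) ((↑(y+1):ℤ) + ↑(l-1) - j - 1)
      = ∑ j ∈ Finset.range (l-2), Cb ((k:ℤ)-1) j * Cb ((n:ℤ)-k) ((y:ℤ)+l-j-1) :=
    Finset.sum_congr rfl fun j _ => by rw [Cb_congr (rfl : (n:ℤ)-k = (n:ℤ)-k)
      (by omega : (↑(y+1):ℤ) + ↑(l-1) - j - 1 = (y:ℤ)+l-j-1)]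
  have hs2 : ∑ j ∈ Finset.range (l-2),
        Cb ((k:ℤ)-1) j * Cb ((n:ℤ)-k) ((y:ℤ) + ↑(l-1) - j - 1)
      = ∑ j ∈ Finset.range (l-2), Cb ((k:ℤ)-1) j * Cb ((n:ℤ)-k) ((y:ℤ)+l-j-2) :=
    Finset.sum_congr rfl fun j _ => by rw [Cb_congr (rfl : (n:ℤ)-k = (n:ℤ)-k)
      (by omega : (y:ℤ) + ↑(l-1) - j - 1 = (y:ℤ)+l-j-2)]
  rw [hs1, hs2]
  have hsum := sum_id n k l y hk hkn hl hyn
  set S1 := ∑ j ∈ Finset.range (l-2), Cb ((k:ℤ)-1) j * Cb ((n:ℤ)-k) ((y:ℤ)+l-j-1) with hS1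
  set S3 := ∑ j ∈ Finset.range (l-1), Cb ((k:ℤ)-1) j * Cb ((n:ℤ)-k) ((y:ℤ)+l-j-1) with hS3
  set S2 := ∑ j ∈ Finset.range (l-2), Cb ((k:ℤ)-1) j * Cb ((n:ℤ)-k) ((y:ℤ)+l-j-2) with hS2
  rw [(by omega : n - (l-1) - (y+1) = n - l - y), (by omega : n - (l-1) - y = (n-l-y)+1)]
  have hcast1 : ((n-l-y : ℕ):ℝ) = (n:ℝ)-l-y := by
    have : (((n-l-y:ℕ)):ℤ) = (n:ℤ)-l-y := by omega
    exact_mod_cast this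
  have c1 : ((l-1:ℕ):ℝ) = (l:ℝ)-1 := by
    have : ((l-1:ℕ):ℤ) = (l:ℤ)-1 := by omega
    exact_mod_cast this
  have f1 : (Nat.factorial (y+1) : ℝ) = ((y:ℝ)+1) * Nat.factorial y := by
    rw [Nat.factorial_succ]; push_cast; ring
  have f2 : (Nat.factorial ((n-l-y)+1) : ℝ) = ((n:ℝ)-l-y+1) * Nat.factorial (n-l-y) := by
    rw [Nat.factorial_succ]; push_cast [hcast1]; ring
  rw [c1, f1, f2]
  have hl1 : ((l:ℝ)-1) ≠ 0 := by
    have : (3:ℝ) ≤ (l:ℝ) := by exact_mod_cast hl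
    intro h; linarith
  have hl2 : ((l:ℝ)-2) ≠ 0 := by
    have : (3:ℝ) ≤ (l:ℝ) := by exact_mod_cast hl
    intro h; linarith
  have hl0 : (l:ℝ) ≠ 0 := by positivity
  have hnf : (Nat.factorial n : ℝ) ≠ 0 := by positivity
  set C : ℝ := (k:ℝ) * (Nat.factorial y : ℝ) * (Nat.factorial (n-l-y) : ℝ) /
      (((l:ℝ)-1) * ((l:ℝ)-2) * (Nat.factorial n : ℝ)) with hC
  have e1 : (k:ℝ) * (((y:ℝ)+1) * Nat.factorial y) * (Nat.factorial (n-l-y)) /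
      (((l:ℝ)-1) * (((l:ℝ)-1)-1) * Nat.factorial n) * S1 = C * (((y:ℝ)+1) * S1) := by
    rw [hC]; ring_nf
  have e2 : (k:ℝ) * (Nat.factorial y) * (((n:ℝ)-l-y+1) * Nat.factorial (n-l-y)) /
      (((l:ℝ)-1) * (((l:ℝ)-1)-1) * Nat.factorial n) * S2 = C * (((n:ℝ)-l-y+1) * S2) := by
    rw [hC]; ring_nf
  have e3 : -(l:ℝ) * ((k:ℝ) * (Nat.factorial y) * (Nat.factorial (n-l-y)) /
      ((l:ℝ) * ((l:ℝ)-1) * Nat.factorial n) * S3) = C * (-(((l:ℝ)-2)) * S3) := by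
    rw [hC]; field_simp
  rw [e1, e2, e3]
  linear_combination C * hsum

lemma d_nonneg (n k l x : ℕ) (hl : 2 ≤ l) : 0 ≤ d n k l x := by
  rw [d_def2 n k l x hl]
  apply mul_nonneg
  · apply div_nonneg
    · positivity
    · have h1 : (1:ℝ) ≤ (l:ℝ) := by exact_mod_cast (by omega : 1 ≤ l)
      have : (0:ℝ) ≤ (l:ℝ)-1 := by linarith
      have h2 : (0:ℝ) ≤ (l:ℝ) := by positivity
      have h3 : (0:ℝ) ≤ (Nat.factorial n : ℝ) := by positivity
      exact mul_nonneg (mul_nonneg h2 this) h3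
  · exact Finset.sum_nonneg fun j _ => mul_nonneg (Cb_nonneg' _ _) (Cb_nonneg' _ _)

lemma diffAll (n k l y : ℕ) (hk : 1 ≤ k) (hkn : k ≤ n) (hl : 1 ≤ l) (hy : 1 ≤ y)
    (hyn : y + l ≤ n) (h1 : l = 1 → y + 2 ≤ n) :
    d n k (l-1) (y+1) - d n k (l-1) y = -(l:ℝ) * d n k l y := by
  rcases (by omega : l = 1 ∨ l = 2 ∨ 3 ≤ l) with rfl | rfl | h3
  · have := diff1 n k hk hkn y hy (h1 rfl)
    simpa using this
  · have := diff2 n k hk hkn y hy (by omega)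
    have h2 : ((2:ℕ):ℝ) = 2 := by norm_cast
    simpa [h2] using this
  · exact diffl n k hk hkn l y h3 hy hyn

lemma d_mono (n k l : ℕ) (hk : 1 ≤ k) (hkn : k ≤ n) (hl : 1 ≤ l) (y1 y2 : ℕ)
    (hy1 : 1 ≤ y1) (h12 : y1 ≤ y2) (hy2 : y2 + l ≤ n) : d n k l y2 ≤ d n k l y1 := by
  induction y2, h12 using Nat.le_induction with
  | base => exact le_rfl
  | succ m hm ih =>
    have hstep := diffAll n k (l+1) m hk hkn (by omega) (by omega) (by omega) (by omega)
    rw [(by omega : l + 1 - 1 = l)] at hstep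
    have hnn := d_nonneg n k (l+1) m (by omega)
    have hlp : (0:ℝ) ≤ ((l+1:ℕ):ℝ) := by positivity
    have : d n k l (m+1) ≤ d n k l m := by nlinarith [hstep, hnn, hlp]
    exact le_trans this (ih (by omega))

lemma optimal_aux (n k : ℕ) (hk : 1 ≤ k) (hkn : k < n) (l : ℕ) (hl1 : 1 ≤ l) (hlk : l ≤ k)
    (D : ℝ) (s : ℕ)
    (hs : IsLeast {x : ℕ | x ∈ Finset.Icc l (n - 1) ∧ c n k l (x + 1) ≤ D / l} s) :
    ∀ x ∈ Finset.Icc l (n - 1),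
      -(c n k (l-1) x) - (x:ℝ) * D ≤ -(c n k (l-1) s) - (s:ℝ) * D := by
  obtain ⟨⟨hsmem, hsc⟩, hslb⟩ := hs
  rw [Finset.mem_Icc] at hsmem
  obtain ⟨hsl, hsn⟩ := hsmem
  have hl0 : (0:ℝ) < (l:ℝ) := by exact_mod_cast (by omega : 0 < l)
  set F : ℕ → ℝ := fun x => -(c n k (l-1) x) - (x:ℝ) * D with hF
  have hdiff : ∀ z, l ≤ z → z + 2 ≤ n →
      F (z+1) - F z = (l:ℝ) * c n k l (z+1) - D := by
    intro z hz hz2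
    have hident := diffAll n k l (z+1-l) hk hkn.le hl1 (by omega) (by omega) (by omega)
    simp only [hF, c]
    rw [(by omega : z + 1 - (l-1) = (z+1-l) + 1), (by omega : z - (l-1) = z+1-l)]
    push_cast
    linarith [hident]
  have step_up : ∀ z, l ≤ z → z < s → F z ≤ F (z+1) := by
    intro z hz hzs
    have hznotin : ¬ (z ∈ Finset.Icc l (n-1) ∧ c n k l (z+1) ≤ D / l) := by
      intro hmem
      exact absurd (hslb hmem) (by omega)
    have hzmem : z ∈ Finset.Icc l (n-1) := Finset.mem_Icc.mpr ⟨hz, by omega⟩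
    have hcgt : D / l < c n k l (z+1) := by
      by_contra hcon
      exact hznotin ⟨hzmem, le_of_not_gt hcon⟩
    have hD : D < (l:ℝ) * c n k l (z+1) := by
      have := (div_lt_iff₀ hl0).mp hcgt
      linarith [this]
    have := hdiff z hz (by omega)
    linarith
  have step_down : ∀ z, s ≤ z → z + 2 ≤ n → F (z+1) ≤ F z := by
    intro z hz hz2
    have hmono : d n k l (z+1-l) ≤ d n k l (s+1-l) :=
      d_mono n k l hk hkn.le hl1 (s+1-l) (z+1-l) (by omega) (by omega) (by omega)
    have hcz : c n k l (z+1) ≤ c n k l (s+1) := by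
      simp only [c]
      rw [(by omega : z + 1 - l = z+1-l), (by omega : s + 1 - l = s+1-l)]
      exact hmono
    have hcle : c n k l (z+1) ≤ D / l := le_trans hcz hsc
    have : (l:ℝ) * c n k l (z+1) ≤ D := by
      have h2 := mul_le_mul_of_nonneg_left hcle hl0.le
      rw [mul_div_cancel₀ D hl0.ne'] at h2
      linarith
    have := hdiff z (by omega) hz2
    linarith
  have up : ∀ j m, m + j = s → l ≤ m → F m ≤ F s := by
    intro j
    induction j with
    | zero =>
      intro m hm _
      obtain rfl : m = s := by omega
      exact le_rfl
    | succ j ih =>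
      intro m hm hlm
      exact le_trans (step_up m hlm (by omega)) (ih (m+1) (by omega) (by omega))
  have down : ∀ j, s + j ≤ n - 1 → F (s+j) ≤ F s := by
    intro j
    induction j with
    | zero => intro _; exact le_rfl
    | succ j ih =>
      intro h
      have h1 : F (s+j+1) ≤ F (s+j) := step_down (s+j) (by omega) (by omega)
      exact le_trans h1 (ih (by omega))
  intro x hx
  rw [Finset.mem_Icc] at hx
  rcases le_or_gt x s with hxs | hxs
  · exact up (s - x) x (by omega) hx.1
  · have := down (x - s) (by omega)
    rwa [(by omega : s + (x - s) = x)] at this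

theorem optimal_point_Fmap (n k : ℕ) (hk : 1 ≤ k) (hkn : k < n) (l : ℕ)
    (hl : l ∈ Finset.Icc 1 k) (w : ℕ → ℕ) (hw : memX n k l w) :
    (∀ s : ℕ, IsLeast {x : ℕ | x ∈ Finset.Icc l (n - 1) ∧
        c n k l (x + 1) ≤ Dmap n k l w / l} s →
      ∀ x ∈ Finset.Icc l (n - 1), Fmap n k l w x ≤ Fmap n k l w s) ∧
    (∀ t : ℕ, IsLeast {x : ℕ | x ∈ Finset.Icc 1 (n - l) ∧
        d n k l x ≤ Dmap n k l w / l} t →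
      ∀ x ∈ Finset.Icc l (n - 1), Fmap n k l w x ≤ Fmap n k l w (t + l - 1)) := by
  rw [Finset.mem_Icc] at hl
  obtain ⟨hl1, hlk⟩ := hl
  have part1 : ∀ s : ℕ, IsLeast {x : ℕ | x ∈ Finset.Icc l (n - 1) ∧
      c n k l (x + 1) ≤ Dmap n k l w / l} s →
      ∀ x ∈ Finset.Icc l (n - 1), Fmap n k l w x ≤ Fmap n k l w s := by
    intro s hs x hx
    have := optimal_aux n k hk hkn l hl1 hlk (Dmap n k l w) s hs x hx
    simpa [Fmap] using this
  refine ⟨part1, ?_⟩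
  intro t ht x hx
  obtain ⟨⟨htmem, htd⟩, htlb⟩ := ht
  rw [Finset.mem_Icc] at htmem
  have hA : IsLeast {x : ℕ | x ∈ Finset.Icc l (n - 1) ∧
      c n k l (x + 1) ≤ Dmap n k l w / l} (t + l - 1) := by
    constructor
    · refine ⟨Finset.mem_Icc.mpr ⟨by omega, by omega⟩, ?_⟩
      have hct : c n k l (t + l - 1 + 1) = d n k l t := by
        simp only [c]
        rw [(by omega : t + l - 1 + 1 - l = t)]
      rw [hct]; exact htd
    · intro z hz
      obtain ⟨hzmem, hzd⟩ := hz
      rw [Finset.mem_Icc] at hzmem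
      have hzB : z - l + 1 ∈ {x : ℕ | x ∈ Finset.Icc 1 (n - l) ∧
          d n k l x ≤ Dmap n k l w / l} := by
        refine ⟨Finset.mem_Icc.mpr ⟨by omega, by omega⟩, ?_⟩
        have hcz : c n k l (z + 1) = d n k l (z - l + 1) := by
          simp only [c]; rw [(by omega : z + 1 - l = z - l + 1)]
        rwa [hcz] at hzd
      have := htlb hzB
      have hmem' : l ≤ z := hzmem.1
      omega
  exact part1 (t + l - 1) hA x hx
end Secretary
end

section
/- A sequence w = (x_1,...,x_k) ∈ X^{(k)} is an optimal point of the map T if and only if for every l ∈ {1,...,k} the letter x_l is an optimal point of the map F_{l,σ^l(w)}. -/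
open Finset

namespace Secretary

/-! Auxiliary lemmas -/

lemma Cb_cast (a b : ℕ) : Cb a b = (a.choose b : ℝ) := by
  unfold Cb
  split
  · rw [Int.toNat_natCast, Int.toNat_natCast]
  · next h =>
    rw [eq_comm, Nat.cast_eq_zero, Nat.choose_eq_zero_iff]
    omega

lemma Cb_pos {a b : ℕ} (h : b ≤ a) : 0 < Cb a b := by
  rw [Cb_cast]; exact_mod_cast Nat.choose_pos h

/-- `Tmap` at level `k` is the constant `ξ`. -/
lemma Tmap_top (n k : ℕ) (v : ℕ → ℕ) : Tmap n k k v = xi n k := by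
  unfold Tmap Gam
  rw [Nat.sub_self]
  norm_num

lemma Gam_congr {n k l j j' : ℕ} {u u' : ℕ → ℕ} (h : ∀ t, 1 ≤ t → u t = u' t) :
    Gam n k l j j' u = Gam n k l j j' u' := by
  unfold Gam
  split
  · next hg =>
    refine Finset.prod_congr rfl fun t ht => ?_
    rw [h t (le_trans hg.1 (Finset.mem_Icc.mp ht).1)]
  · rfl

lemma Rmap_congr {n k l : ℕ} {u u' : ℕ → ℕ} (h : ∀ t, 1 ≤ t → u t = u' t) (j : ℕ) :
    Rmap n k l u j = Rmap n k l u' j := by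
  unfold Rmap
  split
  · next hg =>
    rw [h j hg.1]
    congr 2
    split
    · rfl
    · exact h _ (by omega)
  · rfl

lemma Tmap_congr {n k l : ℕ} {u u' : ℕ → ℕ} (h : ∀ t, 1 ≤ t → u t = u' t) :
    Tmap n k l u = Tmap n k l u' := by
  unfold Tmap
  rw [Gam_congr h]
  congr 1
  refine Finset.sum_congr rfl fun j _ => ?_
  rw [Rmap_congr h, Gam_congr h]

lemma Dmap_congr {n k l : ℕ} {u u' : ℕ → ℕ} (h : ∀ t, 1 ≤ t → u t = u' t) :
    Dmap n k l u = Dmap n k l u' := by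
  unfold Dmap
  rw [Tmap_congr h]
  congr 2
  split
  · rfl
  · exact h 1 le_rfl

lemma Fmap_congr {n k l : ℕ} {u u' : ℕ → ℕ} (h : ∀ t, 1 ≤ t → u t = u' t) (x : ℕ) :
    Fmap n k l u x = Fmap n k l u' x := by
  unfold Fmap; rw [Dmap_congr h]

lemma shift_shift (l : ℕ) (w : ℕ → ℕ) : shift 1 (shift l w) = shift (l + 1) w := by
  funext j; simp only [shift]; congr 1; omega

lemma Gam_shift (n k l : ℕ) (hl : l < k) (v : ℕ → ℕ) (j : ℕ) (h1 : 1 ≤ j) (h2 : j ≤ k - l) :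
    Gam n k l 1 j v = ((v 1 : ℝ) - l) * Gam n k (l + 1) 1 (j - 1) (shift 1 v) := by
  rcases Nat.eq_or_lt_of_le h1 with h | h
  · subst h
    unfold Gam
    rw [if_pos ⟨le_rfl, le_rfl, h2⟩, if_neg (by omega)]
    rw [Finset.Icc_self, Finset.prod_singleton]
    push_cast
    ring
  · unfold Gam
    have g1 : 1 ≤ 1 ∧ 1 ≤ j ∧ j ≤ k - l := ⟨le_rfl, h1, h2⟩
    have g2 : 1 ≤ 1 ∧ 1 ≤ j - 1 ∧ j - 1 ≤ k - (l + 1) := ⟨le_rfl, by omega, by omega⟩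
    rw [if_pos g1, if_pos g2]
    simp only [shift]
    have L : (∏ t ∈ Finset.Icc 1 j, ((v t : ℝ) - l - t + 1))
        = (∏ i ∈ Finset.range (j - 1), ((v (i + 2) : ℝ) - l - (i + 2) + 1)) * ((v 1 : ℝ) - l) := by
      rw [← Finset.Ico_add_one_right_eq_Icc, Finset.prod_Ico_eq_prod_range]
      have e1 : j + 1 - 1 = (j - 1) + 1 := by omega
      rw [e1, Finset.prod_range_succ']
      congr 1
      · refine Finset.prod_congr rfl fun i _ => ?_
        have e2 : 1 + (i + 1) = i + 2 := by omega
        rw [e2]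
        push_cast
        ring
      · norm_num
    have R : (∏ t ∈ Finset.Icc 1 (j - 1), ((v (1 + t) : ℝ) - (l + 1 : ℕ) - t + 1))
        = ∏ i ∈ Finset.range (j - 1), ((v (i + 2) : ℝ) - l - (i + 2) + 1) := by
      rw [← Finset.Ico_add_one_right_eq_Icc, Finset.prod_Ico_eq_prod_range]
      have e1 : j - 1 + 1 - 1 = j - 1 := by omega
      rw [e1]
      refine Finset.prod_congr rfl fun i _ => ?_
      have e2 : 1 + (1 + i) = i + 2 := by omega
      rw [e2]
      push_cast
      ring
    rw [L, R]
    ring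

lemma Rmap_shift (n k l : ℕ) (hl : l < k) (v : ℕ → ℕ) (j : ℕ) (h1 : 2 ≤ j) (h2 : j ≤ k - l) :
    Rmap n k l v j = Rmap n k (l + 1) (shift 1 v) (j - 1) := by
  unfold Rmap
  have g1 : 1 ≤ j ∧ j ≤ k - l := ⟨by omega, h2⟩
  have g2 : 1 ≤ j - 1 ∧ j - 1 ≤ k - (l + 1) := ⟨by omega, by omega⟩
  rw [if_pos g1, if_pos g2]
  simp only [shift]
  have e1 : ((l + 1 : ℕ) : ℤ) + ((j - 1 : ℕ) : ℤ) - 1 = (l : ℤ) + (j : ℕ) - 1 := by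
    push_cast; omega
  rw [e1]
  have e2 : 1 + (j - 1) = j := by omega
  rw [e2]
  by_cases hc : j = k - l
  · rw [if_pos hc, if_pos (by omega : j - 1 = k - (l + 1))]
  · rw [if_neg hc, if_neg (by omega : ¬(j - 1 = k - (l + 1)))]
    have e4 : 1 + (j - 1 + 1) = j + 1 := by omega
    rw [e4]

/-- Recursion for `Tmap`. -/
lemma Tmap_rec (n k l : ℕ) (hl : l < k) (v : ℕ → ℕ) :
    Tmap n k l v = ((v 1 : ℝ) - l) * (rr n k l (v 1) - Dmap n k (l + 1) (shift 1 v)) := by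
  have hkl : 1 ≤ k - l := by omega
  have hD : Dmap n k (l + 1) (shift 1 v)
      = rr n k l (if l + 1 = k then n - 1 else v 2) - Tmap n k (l + 1) (shift 1 v) := by
    unfold Dmap
    have e1 : (((l + 1 : ℕ)) : ℤ) - 1 = (l : ℤ) := by push_cast; ring
    rw [e1]
    congr 2
  have hR1 : Rmap n k l v 1 = rr n k l (v 1) - rr n k l (if l + 1 = k then n - 1 else v 2) := by
    unfold Rmap
    have g1 : 1 ≤ 1 ∧ 1 ≤ k - l := ⟨le_rfl, hkl⟩
    rw [if_pos g1]
    have e1 : ((l : ℤ) + ((1 : ℕ) : ℤ) - 1) = (l : ℤ) := by push_cast; ring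
    rw [e1]
    congr 2
    by_cases hc : (1 : ℕ) = k - l
    · rw [if_pos hc, if_pos (by omega : l + 1 = k)]
    · rw [if_neg hc, if_neg (by omega : ¬(l + 1 = k))]
  have hsplit : (∑ j ∈ Finset.Icc 1 (k - l), Rmap n k l v j * Gam n k l 1 j v)
      = Rmap n k l v 1 * Gam n k l 1 1 v
        + ∑ i ∈ Finset.range (k - l - 1), Rmap n k l v (i + 2) * Gam n k l 1 (i + 2) v := by
    rw [← Finset.Ico_add_one_right_eq_Icc, Finset.sum_Ico_eq_sum_range]
    have e1 : k - l + 1 - 1 = (k - l - 1) + 1 := by omega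
    rw [e1, Finset.sum_range_succ']
    rw [add_comm]
    congr 1
    · refine Finset.sum_congr rfl fun i _ => ?_
      have : 1 + (i + 1) = i + 2 := by omega
      rw [this]
  have hsum2 : ∀ i ∈ Finset.range (k - l - 1),
      Rmap n k l v (i + 2) * Gam n k l 1 (i + 2) v
        = ((v 1 : ℝ) - l) * (Rmap n k (l + 1) (shift 1 v) (i + 1)
            * Gam n k (l + 1) 1 (i + 1) (shift 1 v)) := by
    intro i hi
    rw [Finset.mem_range] at hi
    rw [Rmap_shift n k l hl v (i + 2) (by omega) (by omega),
      Gam_shift n k l hl v (i + 2) (by omega) (by omega)]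
    have : i + 2 - 1 = i + 1 := by omega
    rw [this]
    ring
  have hT' : Tmap n k (l + 1) (shift 1 v)
      = (∑ i ∈ Finset.range (k - l - 1),
          Rmap n k (l + 1) (shift 1 v) (i + 1) * Gam n k (l + 1) 1 (i + 1) (shift 1 v))
        + xi n k * Gam n k (l + 1) 1 (k - l - 1) (shift 1 v) := by
    unfold Tmap
    have e1 : k - (l + 1) = k - l - 1 := by omega
    rw [e1, ← Finset.Ico_add_one_right_eq_Icc, Finset.sum_Ico_eq_sum_range]
    have e2 : k - l - 1 + 1 - 1 = k - l - 1 := rfl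
    rw [e2]
    congr 1
    refine Finset.sum_congr rfl fun i _ => ?_
    have e3 : 1 + i = i + 1 := by omega
    rw [e3]
  have hGamTop : Gam n k l 1 (k - l) v
      = ((v 1 : ℝ) - l) * Gam n k (l + 1) 1 (k - l - 1) (shift 1 v) := by
    have := Gam_shift n k l hl v (k - l) hkl le_rfl
    rwa [show k - l - 1 = k - l - 1 from rfl] at this
  unfold Tmap
  rw [hsplit, Finset.sum_congr rfl hsum2, ← Finset.mul_sum, hD, hGamTop, hT', hR1]
  have hGam11 : Gam n k l 1 1 v = (v 1 : ℝ) - l := by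
    unfold Gam
    rw [if_pos ⟨le_rfl, le_rfl, hkl⟩, Finset.Icc_self, Finset.prod_singleton]
    push_cast; ring
  rw [hGam11]
  ring


lemma Cb_coe {a b : ℤ} (a' b' : ℕ) (ha : a = (a' : ℤ)) (hb : b = (b' : ℤ)) :
    Cb a b = (a'.choose b' : ℝ) := by
  subst ha; subst hb; exact Cb_cast a' b'

lemma rr_neg (n k : ℕ) {l : ℤ} (h : l < 0) (x : ℕ) : rr n k l x = 0 := by
  unfold rr; rw [if_pos h]

lemma rr_zero (n k x : ℕ) : rr n k 0 x =
    1 / (x : ℝ) - (k : ℝ) / n - Cb ((n : ℤ) - x - 1) k / ((x : ℝ) * Cb n k)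
      - (1 / Cb n k) * ∑ j ∈ Finset.Icc 1 x, Cb ((n : ℤ) - j - 1) ((k : ℤ) - 1) / (j : ℝ) := by
  unfold rr
  rw [if_neg (by norm_num), if_pos rfl]

lemma rr_pos (n k m x : ℕ) (hm : 1 ≤ m) : rr n k (m : ℤ) x =
    ((Nat.factorial (x - m - 1) : ℝ) / (Nat.factorial x : ℝ)) *
      (1 - (1 / ((m : ℝ) * Cb n x)) *
        ∑ j ∈ Finset.range (m + 1),
          ((m : ℝ) - j) * Cb k j * Cb ((n : ℤ) - k) ((x : ℤ) - j)) := by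
  unfold rr
  rw [if_neg (by omega : ¬ (m : ℤ) < 0), if_neg (by omega : ¬ (m : ℤ) = 0)]
  norm_num [Int.toNat_natCast]

lemma choose_swap (n a b : ℕ) (ha : a ≤ n) (hb : b ≤ n) :
    ((n - a).choose b : ℝ) * (n.choose a : ℝ) = ((n - b).choose a : ℝ) * (n.choose b : ℝ) := by
  by_cases h : a + b ≤ n
  · rw [Nat.cast_choose ℝ (by omega : b ≤ n - a), Nat.cast_choose ℝ (by omega : a ≤ n - b),
      Nat.cast_choose ℝ ha, Nat.cast_choose ℝ hb]
    have e1 : n - a - b = n - b - a := by omega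
    rw [e1]
    have nz : ∀ m : ℕ, ((Nat.factorial m : ℝ)) ≠ 0 :=
      fun m => Nat.cast_ne_zero.2 (Nat.factorial_ne_zero m)
    field_simp
  · rw [Nat.choose_eq_zero_of_lt (by omega : n - a < b),
      Nat.choose_eq_zero_of_lt (by omega : n - b < a)]
    norm_num

set_option maxHeartbeats 1600000 in
/-- The key binomial identity relating `c` and `rr`. -/
lemma key_identity (n k l x : ℕ) (hk : 1 ≤ k) (hkn : k < n) (h1 : 1 ≤ l) (h2 : l ≤ k)
    (hx1 : l ≤ x) (hx2 : x ≤ n - 1) :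
    c n k (l - 1) x = rr n k ((l : ℤ) - 2) x - ((x : ℝ) - l + 1) * rr n k ((l : ℤ) - 1) x := by
  have hxn : x ≤ n - 1 := hx2
  have hn1 : 1 ≤ n := by omega
  have hCnk : (0 : ℝ) < Cb n k := Cb_pos (by omega)
  have hxpos : 1 ≤ x := by omega
  by_cases hl1 : l = 1
  · subst hl1
    have e1 : rr n k (((1 : ℕ) : ℤ) - 2) x = 0 := rr_neg n k (by norm_num) x
    have e2 : (((1 : ℕ) : ℤ) - 1) = (0 : ℤ) := by norm_num
    rw [e1, e2, rr_zero]
    show d n k 0 (x - 0) = _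
    rw [Nat.sub_zero]
    unfold d
    rw [if_pos rfl]
    have hx0 : ((x : ℝ)) ≠ 0 := Nat.cast_ne_zero.2 (by omega)
    have hn0 : ((n : ℝ)) ≠ 0 := Nat.cast_ne_zero.2 (by omega)
    have hC0 : Cb n k ≠ 0 := ne_of_gt hCnk
    push_cast
    field_simp
    ring
  · by_cases hl2 : l = 2
    · subst hl2
      have hk2 : 2 ≤ k := h2
      obtain ⟨y, rfl⟩ : ∃ y, x = y + 2 := ⟨x - 2, by omega⟩
      have e2 : (((2 : ℕ) : ℤ) - 2) = (0 : ℤ) := by norm_num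
      have e3 : (((2 : ℕ) : ℤ) - 1) = ((1 : ℕ) : ℤ) := by norm_num
      rw [e2, e3, rr_zero, rr_pos n k 1 (y + 2) le_rfl]
      show d n k 1 (y + 2 - 1) = _
      unfold d
      rw [if_neg one_ne_zero, if_pos rfl]
      rw [Finset.sum_range_succ, Finset.sum_range_succ, Finset.sum_range_zero]
      -- split the Icc 1 (y+2) sum
      have h0 : Finset.Icc 1 (y + 2) = insert (y + 2) (Finset.Icc 1 (y + 1)) := by
        ext t
        simp only [Finset.mem_Icc, Finset.mem_insert]
        omega
      have hsplit : ∑ j ∈ Finset.Icc 1 (y + 2), Cb ((n : ℤ) - j - 1) ((k : ℤ) - 1) / (j : ℝ)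
          = (∑ j ∈ Finset.Icc 1 (y + 1), Cb ((n : ℤ) - j - 1) ((k : ℤ) - 1) / (j : ℝ))
            + Cb ((n : ℤ) - ((y + 2 : ℕ) : ℤ) - 1) ((k : ℤ) - 1) / ((y + 2 : ℕ) : ℝ) := by
        rw [h0, Finset.sum_insert (by simp)]
        ring
      rw [hsplit]
      -- convert Cb atoms
      rw [Cb_coe (n - (y + 2) - 1) (k - 1)
          (by omega : (n : ℤ) - ((y + 2 : ℕ) : ℤ) - 1 = ((n - (y + 2) - 1 : ℕ) : ℤ))
          (by omega : (k : ℤ) - 1 = ((k - 1 : ℕ) : ℤ)),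
        Cb_coe (n - (y + 2) - 1) k
          (by omega : (n : ℤ) - ((y + 2 : ℕ) : ℤ) - 1 = ((n - (y + 2) - 1 : ℕ) : ℤ)) rfl,
        Cb_cast n k, Cb_cast n (y + 2), Cb_cast k 0,
        Cb_coe (n - k) (y + 2)
          (by omega : (n : ℤ) - (k : ℤ) = ((n - k : ℕ) : ℤ))
          (by omega : ((y + 2 : ℕ) : ℤ) - ((0 : ℕ) : ℤ) = ((y + 2 : ℕ) : ℤ))]
      -- combinatorial inputs
      have hPn : (n - (y + 2)).choose k
          = (n - (y + 2) - 1).choose (k - 1) + (n - (y + 2) - 1).choose k := by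
        obtain ⟨a, ha⟩ : ∃ a, n - (y + 2) = a + 1 := ⟨n - (y + 2) - 1, by omega⟩
        obtain ⟨b, hb⟩ : ∃ b, k = b + 1 := ⟨k - 1, by omega⟩
        rw [ha, hb, show a + 1 - 1 = a from rfl, show b + 1 - 1 = b from rfl]
        exact Nat.choose_succ_succ' a b
      have hswap : ((n - k).choose (y + 2) : ℝ) * (n.choose k : ℝ)
          = ((n - (y + 2)).choose k : ℝ) * (n.choose (y + 2) : ℝ) :=
        choose_swap n k (y + 2) (by omega) (by omega)
      have hPn' : ((n - (y + 2)).choose k : ℝ)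
          = ((n - (y + 2) - 1).choose (k - 1) : ℝ) + ((n - (y + 2) - 1).choose k : ℝ) := by
        exact_mod_cast hPn
      have hkey2 : ((n - k).choose (y + 2) : ℝ) * (n.choose k : ℝ)
          = (((n - (y + 2) - 1).choose (k - 1) : ℝ) + ((n - (y + 2) - 1).choose k : ℝ))
            * (n.choose (y + 2) : ℝ) := by
        rw [← hPn']; exact hswap
      -- factorial facts
      have hfac : ((y + 2).factorial : ℝ) = (y + 2) * (y + 1) * (y.factorial : ℝ) := by
        rw [show y + 2 = (y + 1) + 1 from rfl, Nat.factorial_succ, Nat.factorial_succ]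
        push_cast
        ring
      have hfy : ((y : ℕ) + 2 - 1 - 1 : ℕ) = y := by omega
      rw [hfy, hfac]
      have hCnx : (0 : ℝ) < (n.choose (y + 2) : ℝ) := by
        exact_mod_cast Nat.choose_pos (by omega : y + 2 ≤ n)
      have hCnk' : (0 : ℝ) < (n.choose k : ℝ) := by
        exact_mod_cast Nat.choose_pos (by omega : k ≤ n)
      have hy0 : ((y : ℝ) + 2) ≠ 0 := by positivity
      have hn0 : ((n : ℝ)) ≠ 0 := Nat.cast_ne_zero.2 (by omega)
      have hfy0 : ((y.factorial : ℕ) : ℝ) ≠ 0 := Nat.cast_ne_zero.2 (Nat.factorial_ne_zero y)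
      rw [Cb_cast n k] at hCnk
      rw [Nat.choose_zero_right]
      push_cast
      field_simp
      linear_combination
        (-((n : ℝ) * ((y : ℝ) + 1))) * hkey2
    · -- case l ≥ 3
      have hl3 : 3 ≤ l := by omega
      obtain ⟨p, rfl⟩ : ∃ p, l = p + 3 := ⟨l - 3, by omega⟩
      obtain ⟨y, rfl⟩ : ∃ y, x = y + p + 3 := ⟨x - (p + 3), by omega⟩
      have hkp : p + 3 ≤ k := h2
      have hnx : y + p + 3 ≤ n - 1 := hx2
      -- canonical sums
      set T : ℝ := ∑ j ∈ Finset.range (p + 1),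
        (((k - 1).choose j : ℝ) * (((n - k).choose (y + p + 2 - j) : ℝ))) with hTdef
      set S0 : ℝ := ∑ j ∈ Finset.range (p + 2),
        ((k.choose j : ℝ) * (((n - k).choose (y + p + 3 - j) : ℝ))) with hS0def
      have hjs : ∑ j ∈ Finset.range (p + 2),
          (j : ℝ) * ((k.choose j : ℝ) * (((n - k).choose (y + p + 3 - j) : ℝ))) = k * T := by
        rw [Finset.sum_range_succ']
        have e0 : ((0 : ℕ) : ℝ) * ((k.choose 0 : ℝ) * (((n - k).choose (y + p + 3 - 0) : ℝ)))
            = 0 := by norm_num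
        rw [e0, add_zero, hTdef, Finset.mul_sum]
        refine Finset.sum_congr rfl fun i hi => ?_
        rw [Finset.mem_range] at hi
        have hnat : k * ((k - 1).choose i) = k.choose (i + 1) * (i + 1) := by
          have := Nat.add_one_mul_choose_eq (k - 1) i
          rwa [show k - 1 + 1 = k from by omega] at this
        have hidx : y + p + 3 - (i + 1) = y + p + 2 - i := by omega
        rw [hidx]
        have hcast : (k : ℝ) * ((k - 1).choose i : ℝ) = (k.choose (i + 1) : ℝ) * ((i + 1 : ℕ) : ℝ) := by
          exact_mod_cast hnat
        push_cast at hcast ⊢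
        nlinarith [hcast]
      -- conversion of the two rr sums
      have hconv2 : ∑ j ∈ Finset.range ((p + 2) + 1),
            ((((p + 2 : ℕ)) : ℝ) - j) * Cb k j * Cb ((n : ℤ) - k) (((y + p + 3 : ℕ) : ℤ) - j)
          = ((p : ℝ) + 2) * S0 - k * T := by
        rw [Finset.sum_range_succ, sub_self, zero_mul, zero_mul, add_zero]
        have e : ∀ j ∈ Finset.range (p + 2),
            ((((p + 2 : ℕ)) : ℝ) - j) * Cb k j * Cb ((n : ℤ) - k) (((y + p + 3 : ℕ) : ℤ) - j)
              = ((p : ℝ) + 2) * ((k.choose j : ℝ) * (((n - k).choose (y + p + 3 - j) : ℝ)))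
                - (j : ℝ) * ((k.choose j : ℝ) * (((n - k).choose (y + p + 3 - j) : ℝ))) := by
          intro j hj
          rw [Finset.mem_range] at hj
          rw [Cb_cast k j, Cb_coe (n - k) (y + p + 3 - j) (by omega) (by omega)]
          push_cast
          ring
        rw [Finset.sum_congr rfl e, Finset.sum_sub_distrib, ← Finset.mul_sum, hjs, ← hS0def]
      have hconv1 : ∑ j ∈ Finset.range ((p + 1) + 1),
            ((((p + 1 : ℕ)) : ℝ) - j) * Cb k j * Cb ((n : ℤ) - k) (((y + p + 3 : ℕ) : ℤ) - j)
          = ((p : ℝ) + 1) * S0 - k * T := by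
        have e : ∀ j ∈ Finset.range (p + 2),
            ((((p + 1 : ℕ)) : ℝ) - j) * Cb k j * Cb ((n : ℤ) - k) (((y + p + 3 : ℕ) : ℤ) - j)
              = ((p : ℝ) + 1) * ((k.choose j : ℝ) * (((n - k).choose (y + p + 3 - j) : ℝ)))
                - (j : ℝ) * ((k.choose j : ℝ) * (((n - k).choose (y + p + 3 - j) : ℝ))) := by
          intro j hj
          rw [Finset.mem_range] at hj
          rw [Cb_cast k j, Cb_coe (n - k) (y + p + 3 - j) (by omega) (by omega)]
          push_cast
          ring
        rw [show (p + 1) + 1 = p + 2 from rfl, Finset.sum_congr rfl e,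
          Finset.sum_sub_distrib, ← Finset.mul_sum, hjs, ← hS0def]
      -- conversion of the d sum
      have hconvT : ∑ j ∈ Finset.range ((p + 2) - 1),
            Cb ((k : ℤ) - 1) j * Cb ((n : ℤ) - k) (((y + 1 : ℕ) : ℤ) + ((p + 2 : ℕ) : ℤ) - j - 1)
          = T := by
        rw [hTdef, show (p + 2) - 1 = p + 1 from rfl]
        refine Finset.sum_congr rfl fun j hj => ?_
        rw [Finset.mem_range] at hj
        rw [Cb_coe (k - 1) j (by omega) rfl, Cb_coe (n - k) (y + p + 2 - j) (by omega) (by omega)]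
      -- rewrite goal
      show d n k (p + 3 - 1) (y + p + 3 - (p + 3 - 1)) = _
      rw [show p + 3 - 1 = p + 2 from rfl, show y + p + 3 - (p + 2) = y + 1 from by omega]
      unfold d
      rw [if_neg (by omega), if_neg (by omega)]
      rw [show ((p + 3 : ℕ) : ℤ) - 2 = ((p + 1 : ℕ) : ℤ) from by omega,
        show ((p + 3 : ℕ) : ℤ) - 1 = ((p + 2 : ℕ) : ℤ) from by omega,
        rr_pos n k (p + 1) (y + p + 3) (by omega), rr_pos n k (p + 2) (y + p + 3) (by omega)]
      rw [show y + p + 3 - (p + 1) - 1 = y + 1 from by omega,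
        show y + p + 3 - (p + 2) - 1 = y from by omega,
        show n - (p + 2) - (y + 1) = n - (y + p + 3) from by omega]
      rw [Cb_cast n (y + p + 3), hconv1, hconv2, hconvT]
      -- numeric facts
      have h6 : ((n.choose (y + p + 3) : ℝ)) * ((y + p + 3).factorial : ℝ)
          * ((n - (y + p + 3)).factorial : ℝ) = (n.factorial : ℝ) := by
        exact_mod_cast Nat.choose_mul_factorial_mul_factorial (by omega : y + p + 3 ≤ n)
      have hfac1 : ((y + 1).factorial : ℝ) = ((y : ℝ) + 1) * (y.factorial : ℝ) := by
        rw [Nat.factorial_succ]; push_cast; ring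
      have hX : (0 : ℝ) < (n.choose (y + p + 3) : ℝ) := by
        exact_mod_cast Nat.choose_pos (by omega : y + p + 3 ≤ n)
      have nz : ∀ m : ℕ, ((Nat.factorial m : ℕ) : ℝ) ≠ 0 :=
        fun m => Nat.cast_ne_zero.2 (Nat.factorial_ne_zero m)
      have hp1 : ((p : ℝ) + 1) ≠ 0 := by positivity
      have hp2 : ((p : ℝ) + 2) ≠ 0 := by positivity
      have hXne : ((n.choose (y + p + 3) : ℝ)) ≠ 0 := ne_of_gt hX
      have hNf : ((n.factorial : ℕ) : ℝ) ≠ 0 := nz n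
      have hxf : (((y + p + 3).factorial : ℕ) : ℝ) ≠ 0 := nz _
      have hyf : ((y.factorial : ℕ) : ℝ) ≠ 0 := nz _
      rw [hfac1, show ((p + 2 : ℕ) : ℝ) - 1 = ((p : ℝ) + 1) from by push_cast; ring]
      push_cast
      field_simp
      linear_combination ((k : ℝ) * ((y : ℝ) + 1) * T) * h6


lemma Dmap_zero (n k : ℕ) (u : ℕ → ℕ) : Dmap n k 0 u = -Tmap n k 0 u := by
  unfold Dmap rr
  rw [if_pos (by norm_num : ((0 : ℕ) : ℤ) - 1 < 0)]
  ring

/-- Rearrangement: `-D_{l-1}(u) = F_{l,σu}(u 1) + (l-1)·D_l(σu)`. -/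
lemma Dmap_rearrange (n k l : ℕ) (hk : 1 ≤ k) (h1 : 1 ≤ l) (hlk : l ≤ k) (hkn : k < n)
    (u : ℕ → ℕ) (hx1 : l ≤ u 1) (hx2 : u 1 ≤ n - 1) :
    -Dmap n k (l - 1) u
      = Fmap n k l (shift 1 u) (u 1) + ((l : ℝ) - 1) * Dmap n k l (shift 1 u) := by
  have hlk' : l - 1 < k := by omega
  have hD : Dmap n k (l - 1) u = rr n k (((l - 1 : ℕ) : ℤ) - 1) (u 1) - Tmap n k (l - 1) u := by
    unfold Dmap
    rw [if_neg (by omega : ¬(l - 1 = k))]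
  rw [hD, Tmap_rec n k (l - 1) hlk' u, show (l - 1) + 1 = l from by omega]
  unfold Fmap c
  have hkey := key_identity n k l (u 1) hk hkn h1 hlk hx1 hx2
  unfold c at hkey
  rw [hkey]
  have c1 : ((l - 1 : ℕ) : ℤ) - 1 = (l : ℤ) - 2 := by omega
  have c2 : ((l - 1 : ℕ) : ℤ) = (l : ℤ) - 1 := by omega
  have c3 : ((l - 1 : ℕ) : ℝ) = (l : ℝ) - 1 := by
    have : ((l - 1 : ℕ) : ℝ) = ((l : ℕ) : ℝ) - ((1 : ℕ) : ℝ) := by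
      rw [← Nat.cast_sub h1]
    rw [this]; norm_num
  rw [c1, c2, c3]
  ring

lemma memX_shift {n k l : ℕ} {u : ℕ → ℕ} (h : memX n k l u) :
    memX n k (l + 1) (shift 1 u) := by
  intro j hj
  rw [Finset.mem_Icc] at hj
  have := h (1 + j) (by rw [Finset.mem_Icc]; omega)
  simp only [shift]
  omega

lemma shift_one_eq {l : ℕ} (w : ℕ → ℕ) (h : 1 ≤ l) :
    shift 1 (shift (l - 1) w) = shift l w := by
  rw [shift_shift, Nat.sub_add_cancel h]
theorem optimal_point_T_iff (n k : ℕ) (hk : 1 ≤ k) (hkn : k < n) (w : ℕ → ℕ)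
    (hw : memX n k 0 w) :
    (∀ v : ℕ → ℕ, memX n k 0 v → Tmap n k 0 v ≤ Tmap n k 0 w) ↔
      ∀ l ∈ Finset.Icc 1 k, ∀ x ∈ Finset.Icc l (n - 1),
        Fmap n k l (shift l w) x ≤ Fmap n k l (shift l w) (w l) := by
  have hwB : ∀ j, 1 ≤ j → j ≤ k → j ≤ w j ∧ w j ≤ n - 1 := by
    intro j hj1 hj2
    have := hw j (by rw [Finset.mem_Icc]; omega)
    omega
  constructor
  · intro Hopt l hl x hx
    rw [Finset.mem_Icc] at hl hx
    set v : ℕ → ℕ := fun j => if j = l then x else w j with hv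
    have hveq : ∀ t, t ≠ l → v t = w t := by intro t ht; simp [hv, ht]
    have hvl : v l = x := by simp [hv]
    have hvmem : memX n k 0 v := by
      intro j hj
      rw [Finset.mem_Icc] at hj
      by_cases hjl : j = l
      · subst hjl; rw [hvl]; omega
      · rw [hveq j hjl]
        have := hw j (by rw [Finset.mem_Icc]; omega)
        omega
    have hTv : Tmap n k 0 v ≤ Tmap n k 0 w := Hopt v hvmem
    have key : ∀ m, m ≤ l - 1 → Dmap n k m (shift m w) ≤ Dmap n k m (shift m v) := by
      intro m
      induction m with
      | zero =>
        intro _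
        have e1 : Dmap n k 0 (shift 0 w) = Dmap n k 0 w :=
          Dmap_congr (fun t ht => by simp [shift])
        have e2 : Dmap n k 0 (shift 0 v) = Dmap n k 0 v :=
          Dmap_congr (fun t ht => by simp [shift])
        rw [e1, e2, Dmap_zero, Dmap_zero]
        linarith
      | succ m ih =>
        intro hm
        have ihm := ih (by omega)
        have hmk : m < k := by omega
        have expand : ∀ u : ℕ → ℕ, Dmap n k m u
            = rr n k ((m : ℤ) - 1) (u 1)
              - ((u 1 : ℝ) - m) * (rr n k m (u 1) - Dmap n k (m + 1) (shift 1 u)) := by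
          intro u
          have h1 : Dmap n k m u
              = rr n k ((m : ℤ) - 1) (if m = k then n - 1 else u 1) - Tmap n k m u := rfl
          rw [h1, if_neg (by omega : ¬ m = k), Tmap_rec n k m hmk u]
        have hW := expand (shift m w)
        rw [shift_shift] at hW
        have hV := expand (shift m v)
        rw [shift_shift] at hV
        rw [hW, hV] at ihm
        have hsame : shift m v 1 = shift m w 1 := by
          show v (m + 1) = w (m + 1)
          exact hveq (m + 1) (by omega)
        rw [hsame] at ihm
        have ha : m + 1 ≤ shift m w 1 := by
          show m + 1 ≤ w (m + 1)
          exact (hwB (m + 1) (by omega) (by omega)).1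
        have hcoef : (0 : ℝ) < (shift m w 1 : ℝ) - m := by
          have : (m : ℝ) + 1 ≤ (shift m w 1 : ℝ) := by exact_mod_cast ha
          linarith
        have h2 : ((shift m w 1 : ℝ) - m) * Dmap n k (m + 1) (shift (m + 1) w)
            ≤ ((shift m w 1 : ℝ) - m) * Dmap n k (m + 1) (shift (m + 1) v) := by
          nlinarith [ihm]
        exact le_of_mul_le_mul_left h2 hcoef
    have hkey := key (l - 1) le_rfl
    have a1 : shift (l - 1) v 1 = x := by
      show v (l - 1 + 1) = x
      rw [show l - 1 + 1 = l from by omega, hvl]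
    have a2 : shift (l - 1) w 1 = w l := by
      show w (l - 1 + 1) = w l
      rw [show l - 1 + 1 = l from by omega]
    have hEv := Dmap_rearrange n k l hk hl.1 hl.2 hkn (shift (l - 1) v)
      (by rw [a1]; exact hx.1) (by rw [a1]; exact hx.2)
    have hEw := Dmap_rearrange n k l hk hl.1 hl.2 hkn (shift (l - 1) w)
      (by rw [a2]; exact (hwB l hl.1 hl.2).1) (by rw [a2]; exact (hwB l hl.1 hl.2).2)
    rw [a1, shift_one_eq v hl.1] at hEv
    rw [a2, shift_one_eq w hl.1] at hEw
    have hFc : Fmap n k l (shift l v) x = Fmap n k l (shift l w) x :=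
      Fmap_congr (fun t ht => by
        show v (l + t) = w (l + t)
        exact hveq (l + t) (by omega)) x
    have hDc : Dmap n k l (shift l v) = Dmap n k l (shift l w) :=
      Dmap_congr (fun t ht => by
        show v (l + t) = w (l + t)
        exact hveq (l + t) (by omega))
    rw [hFc, hDc] at hEv
    linarith [hkey, hEv, hEw]
  · intro H v hv
    have claim : ∀ m l, l + m = k → 1 ≤ l → ∀ u : ℕ → ℕ, memX n k l u →
        Dmap n k l (shift l w) ≤ Dmap n k l u := by
      intro m
      induction m with
      | zero =>
        intro l hlk hl1 u hu
        have hl : l = k := by omega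
        have eD : ∀ z : ℕ → ℕ, Dmap n k l z = rr n k ((l : ℤ) - 1) (n - 1) - xi n k := by
          intro z
          have h1 : Dmap n k l z
              = rr n k ((l : ℤ) - 1) (if l = k then n - 1 else z 1) - Tmap n k l z := rfl
          rw [h1, if_pos hl, hl, Tmap_top]
        rw [eD, eD]
      | succ m ih =>
        intro l hlk hl1 u hu
        have hlk' : l < k := by omega
        have hu1 := hu 1 (by rw [Finset.mem_Icc]; omega)
        have hA := Dmap_rearrange n k (l + 1) hk (by omega) (by omega) hkn u
          (by omega) (by omega)
        rw [show l + 1 - 1 = l from by omega] at hA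
        have hwl1 := hwB (l + 1) (by omega) (by omega)
        have a2 : shift l w 1 = w (l + 1) := rfl
        have hB := Dmap_rearrange n k (l + 1) hk (by omega) (by omega) hkn (shift l w)
          (by rw [a2]; exact hwl1.1) (by rw [a2]; exact hwl1.2)
        rw [show l + 1 - 1 = l from by omega, a2, shift_shift] at hB
        have ihu := ih (l + 1) (by omega) (by omega) (shift 1 u) (memX_shift hu)
        have hH := H (l + 1) (by rw [Finset.mem_Icc]; omega) (u 1)
          (by rw [Finset.mem_Icc]; omega)
        have hF : Fmap n k (l + 1) (shift 1 u) (u 1)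
            = Fmap n k (l + 1) (shift (l + 1) w) (u 1)
              + (u 1 : ℝ) * Dmap n k (l + 1) (shift (l + 1) w)
              - (u 1 : ℝ) * Dmap n k (l + 1) (shift 1 u) := by
          unfold Fmap; ring
        have hcoef : (0 : ℝ) ≤ (u 1 : ℝ) - l := by
          have : (l : ℝ) + 1 ≤ (u 1 : ℝ) := by exact_mod_cast hu1.1
          linarith
        have hmul : ((u 1 : ℝ) - l) * Dmap n k (l + 1) (shift (l + 1) w)
            ≤ ((u 1 : ℝ) - l) * Dmap n k (l + 1) (shift 1 u) :=
          mul_le_mul_of_nonneg_left ihu hcoef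
        push_cast at hA hB
        linarith [hA, hB, hF, hH, hmul]
    have hv1 := hv 1 (by rw [Finset.mem_Icc]; omega)
    have hA := Dmap_rearrange n k 1 hk le_rfl hk hkn v (by omega) (by omega)
    have hB := Dmap_rearrange n k 1 hk le_rfl hk hkn w
      (hwB 1 le_rfl hk).1 (hwB 1 le_rfl hk).2
    rw [show (1 : ℕ) - 1 = 0 from rfl, Dmap_zero] at hA hB
    have ihu := claim (k - 1) 1 (by omega) le_rfl (shift 1 v) (memX_shift hv)
    have hH := H 1 (by rw [Finset.mem_Icc]; omega) (v 1) (by rw [Finset.mem_Icc]; omega)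
    have hF : Fmap n k 1 (shift 1 v) (v 1)
        = Fmap n k 1 (shift 1 w) (v 1)
          + (v 1 : ℝ) * Dmap n k 1 (shift 1 w)
          - (v 1 : ℝ) * Dmap n k 1 (shift 1 v) := by
      unfold Fmap; ring
    have hmul : (v 1 : ℝ) * Dmap n k 1 (shift 1 w) ≤ (v 1 : ℝ) * Dmap n k 1 (shift 1 v) :=
      mul_le_mul_of_nonneg_left ihu (Nat.cast_nonneg _)
    push_cast at hA hB
    linarith [hA, hB, hF, hH, hmul]
end Secretary
end
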